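/- In the ring of formal power series ℤ⟦q⟧, the following identity holds: g(q⁶,q⁹)·(g(q⁷,q⁸) − q·g(q²,q¹³)) − q·g(q¹²,q³)·(g(q¹¹,q⁴) + q·g(q,q¹⁴)) = φ(q)². -/

import Mathlib

/-- `fJacobi a b` is the theta-type series `f(q^a, q^b) = ∑_{j ∈ ℤ} q^{a·j(j−1)/2 + b·j(j+1)/2}`
in `ℤ⟦q⟧`. For each exponent `N`, all integers `j` contributing to the coefficient of `q^N`
lie in `[-(N+1), N+1]` (assuming `a`, `b` not both zero), so the coefficient is a finite count. -/
noncomputable def fJacobi (a b : ℕ) : PowerSeries ℤ :=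
  PowerSeries.mk fun N =>
    ∑ j ∈ Finset.Icc (-(N : ℤ) - 1) ((N : ℤ) + 1),
      if (a : ℤ) * (j * (j - 1) / 2) + (b : ℤ) * (j * (j + 1) / 2) = (N : ℤ) then 1 else 0

/-- `gJacobi a b` is the signed theta series
`g(q^a, q^b) = ∑_{j ∈ ℤ} (−1)^j q^{a·j(j−1)/2 + b·j(j+1)/2}` in `ℤ⟦q⟧`. -/
noncomputable def gJacobi (a b : ℕ) : PowerSeries ℤ :=
  PowerSeries.mk fun N =>
    ∑ j ∈ Finset.Icc (-(N : ℤ) - 1) ((N : ℤ) + 1),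
      if (a : ℤ) * (j * (j - 1) / 2) + (b : ℤ) * (j * (j + 1) / 2) = (N : ℤ)
      then (-1 : ℤ) ^ j.natAbs else 0

/-- `eulerPhi = φ(q) = ∏_{j=1}^∞ (1 − q^j)` in `ℤ⟦q⟧`: the coefficient of `q^N` is the
(stable) coefficient of `q^N` in the partial product `∏_{j=1}^{N+1} (1 − q^j)`. -/
noncomputable def eulerPhi : PowerSeries ℤ :=
  PowerSeries.mk fun N =>
    PowerSeries.coeff N
      (∏ j ∈ Finset.range (N + 1), (1 - (PowerSeries.X : PowerSeries ℤ) ^ (j + 1)))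

/-- `φ(q²) = ∏_{j=1}^∞ (1 − q^{2j})` in `ℤ⟦q⟧`. -/
noncomputable def eulerPhi2 : PowerSeries ℤ :=
  PowerSeries.mk fun N =>
    PowerSeries.coeff N
      (∏ j ∈ Finset.range (N + 1), (1 - (PowerSeries.X : PowerSeries ℤ) ^ (2 * (j + 1))))

/-- `S1 = ∑_{i=0}^∞ q^{2i²} / ∏_{k=1}^{2i}(1−q^k)` in `ℤ⟦q⟧`: the coefficient of `q^N` is the
(stable) coefficient of `q^N` in the partial sum over `i ≤ N` (terms with `i > N` have lowest
degree `2i² > N`). Each denominator has constant term `1`, hence is inverted via `invOfUnit`. -/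
noncomputable def S1 : PowerSeries ℤ :=
  PowerSeries.mk fun N =>
    PowerSeries.coeff N (∑ i ∈ Finset.range (N + 1),
      (PowerSeries.X : PowerSeries ℤ) ^ (2 * i ^ 2) *
        PowerSeries.invOfUnit
          (∏ k ∈ Finset.range (2 * i), (1 - (PowerSeries.X : PowerSeries ℤ) ^ (k + 1))) 1)

/-- `S2 = ∑_{i=0}^∞ q^{2i²+2i} / ∏_{k=1}^{2i+1}(1−q^k)` in `ℤ⟦q⟧`. -/
noncomputable def S2 : PowerSeries ℤ :=
  PowerSeries.mk fun N =>
    PowerSeries.coeff N (∑ i ∈ Finset.range (N + 1),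
      (PowerSeries.X : PowerSeries ℤ) ^ (2 * i ^ 2 + 2 * i) *
        PowerSeries.invOfUnit
          (∏ k ∈ Finset.range (2 * i + 1), (1 - (PowerSeries.X : PowerSeries ℤ) ^ (k + 1))) 1)

/-- `pDO m` is the number of partitions of `m` into distinct odd parts. -/
noncomputable def pDO (m : ℕ) : ℕ :=
  Nat.card {p : m.Partition // p.parts.Nodup ∧ ∀ i ∈ p.parts, Odd i}

/-- `aCount k` is the number of partitions `(λ₁^{f₁},…,λ_j^{f_j})` of `3k` (encoded as the list
`[(λ₁,f₁),…,(λ_j,f_j)]` with `λ₁ > ⋯ > λ_j > 0`) with all multiplicities `1 ≤ fᵢ ≤ 2`,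
`f₁ ≡ λ₁ (mod 3)` and `fᵢ + fᵢ₊₁ + λᵢ − λᵢ₊₁ ≡ 0 (mod 3)` for `1 ≤ i < j`. -/
noncomputable def aCount (k : ℕ) : ℕ :=
  Nat.card {L : List (ℕ × ℕ) //
    (L.map fun p => p.2 * p.1).sum = 3 * k ∧
    (∀ p ∈ L, 0 < p.1 ∧ 1 ≤ p.2 ∧ p.2 ≤ 2) ∧
    List.Chain' (fun p q => q.1 < p.1 ∧ ((p.2 : ℤ) + q.2 + p.1 - q.1) % 3 = 0) L ∧
    ∀ p ∈ L.head?, (p.2 : ℤ) % 3 = (p.1 : ℤ) % 3}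

/-- `bCount k` : same as `aCount` but for partitions of `3k − 2`. -/
noncomputable def bCount (k : ℕ) : ℕ :=
  Nat.card {L : List (ℕ × ℕ) //
    (L.map fun p => p.2 * p.1).sum = 3 * k - 2 ∧
    (∀ p ∈ L, 0 < p.1 ∧ 1 ≤ p.2 ∧ p.2 ≤ 2) ∧
    List.Chain' (fun p q => q.1 < p.1 ∧ ((p.2 : ℤ) + q.2 + p.1 - q.1) % 3 = 0) L ∧
    ∀ p ∈ L.head?, (p.2 : ℤ) % 3 = (p.1 : ℤ) % 3}

/-- Number of partitions of `n` all of whose parts have residue mod 15 outside `{r₁, r₂, r₃}`. -/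
noncomputable def pAvoid (n : ℕ) (r₁ r₂ r₃ : ℕ) : ℕ :=
  Nat.card {p : n.Partition // ∀ i ∈ p.parts, i % 15 ≠ r₁ ∧ i % 15 ≠ r₂ ∧ i % 15 ≠ r₃}

open PowerSeries Finset


lemma sg_one (z : ℤ) : (-1:ℤ)^z.natAbs = if z % 2 = 0 then 1 else -1 := by
  rcases Int.even_or_odd z with h | h
  · rw [if_pos (Int.even_iff.mp h), Even.neg_one_pow (Int.natAbs_even.mpr h)]
  · have h2 := Int.odd_iff.mp h
    rw [if_neg (by omega), Odd.neg_one_pow (Int.natAbs_odd.mpr h)]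

lemma sg_mul (m n : ℤ) : (-1:ℤ)^m.natAbs * (-1:ℤ)^n.natAbs = if (m+n) % 2 = 0 then 1 else -1 := by
  rw [sg_one, sg_one]
  split_ifs <;> omega

lemma quad_nonneg (A c j : ℤ) (hA : 0 ≤ A) (hc : |c| ≤ A) : 0 ≤ A*j^2 + c*j := by
  have hj2 : j^2 = |j| * |j| := by rw [abs_mul_abs_self]; ring
  have h1 : |j| ≤ j^2 := by
    rcases le_or_gt (|j|) 1 with h | h
    · have := abs_nonneg j; nlinarith
    · nlinarith
  have : c*j ≥ -(|c| * |j|) := by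
    have := neg_abs_le (c*j); rw [abs_mul] at this; linarith
  nlinarith [abs_nonneg j]

lemma quad_bound (A c σ j : ℤ) (N : ℕ) (hA : 2 ≤ A) (hc : |c| < A) (hσ : 0 ≤ σ)
    (h : A*j^2 + c*j + σ ≤ 2*N) : j ∈ Finset.Icc (-(N:ℤ)-1) ((N:ℤ)+1) := by
  rw [Finset.mem_Icc]
  rcases le_or_gt (|j|) 1 with hj | hj
  · rw [abs_le] at hj
    have h0 : 0 ≤ A*j^2 + c*j := quad_nonneg A c j (by linarith) (by linarith)
    constructor <;> omega
  · have h2 : (2:ℤ) ≤ |j| := hj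
    have hj2 : j^2 = |j| * |j| := by rw [abs_mul_abs_self]; ring
    have hcj : c*j ≥ -(|c| * |j|) := by
      have := neg_abs_le (c*j); rw [abs_mul] at this; linarith
    have hA1 : |c| * |j| ≤ (A-1) * |j| := by
      apply mul_le_mul_of_nonneg_right (by linarith) (abs_nonneg j)
    have hB : 0 ≤ A * (|j| * (|j| - 2)) :=
      mul_nonneg (by linarith) (mul_nonneg (abs_nonneg j) (by linarith))
    have h3 : A*j^2 + c*j ≥ (A+1) * |j| := by nlinarith
    have : |j| ≤ N := by nlinarith
    rw [abs_le] at this; constructor <;> omega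


noncomputable def bx (N : ℕ) : Finset ℤ := Finset.Icc (-(N:ℤ)-1) ((N:ℤ)+1)

def EE (a b σ : ℕ) (j : ℤ) : ℤ := (a:ℤ)*(j*(j-1)) + (b:ℤ)*(j*(j+1)) + 2*σ

noncomputable def theta (a b σ : ℕ) : PowerSeries ℤ :=
  PowerSeries.mk fun N => ∑ j ∈ bx N, if EE a b σ j = 2*(N:ℤ) then (-1:ℤ)^j.natAbs else 0

lemma EE_expand (a b σ : ℕ) (j : ℤ) :
    EE a b σ j = ((a:ℤ)+b)*j^2 + ((b:ℤ)-a)*j + 2*σ := by unfold EE; ring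

lemma EE_even (a b σ : ℕ) (j : ℤ) : 2 ∣ EE a b σ j := by
  obtain ⟨u, hu⟩ := Int.even_mul_succ_self (j-1)
  obtain ⟨v, hv⟩ := Int.even_mul_succ_self j
  refine ⟨(a:ℤ)*u + (b:ℤ)*v + σ, ?_⟩
  unfold EE
  linear_combination (a:ℤ) * hu + (b:ℤ) * hv

lemma EE_nonneg (a b σ : ℕ) (j : ℤ) : 0 ≤ EE a b σ j := by
  have ha : (0:ℤ) ≤ a := by exact_mod_cast Nat.zero_le a
  have hb : (0:ℤ) ≤ b := by exact_mod_cast Nat.zero_le b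
  have hσ : (0:ℤ) ≤ σ := by exact_mod_cast Nat.zero_le σ
  have h := quad_nonneg ((a:ℤ)+b) ((b:ℤ)-a) j (by linarith)
    (abs_le.mpr ⟨by linarith, by linarith⟩)
  rw [EE_expand]; linarith

lemma EE_mem (a b σ : ℕ) (ha : 1 ≤ a) (hb : 1 ≤ b) (j : ℤ) (N : ℕ)
    (h : EE a b σ j ≤ 2*N) : j ∈ bx N := by
  have ha' : (1:ℤ) ≤ a := by exact_mod_cast ha
  have hb' : (1:ℤ) ≤ b := by exact_mod_cast hb
  have hσ : (0:ℤ) ≤ σ := by exact_mod_cast Nat.zero_le σ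
  rw [EE_expand] at h
  exact quad_bound ((a:ℤ)+b) ((b:ℤ)-a) (2*σ) j N (by linarith)
    (abs_lt.mpr ⟨by linarith, by linarith⟩) (by linarith) (by linarith)

lemma gJacobi_eq (a b : ℕ) : gJacobi a b = theta a b 0 := by
  unfold gJacobi theta bx
  apply PowerSeries.ext; intro N
  rw [PowerSeries.coeff_mk, PowerSeries.coeff_mk]
  apply Finset.sum_congr rfl
  intro j _
  congr 1
  apply propext
  have h1 : 2 * (j * (j-1) / 2) = j * (j-1) := by
    apply Int.mul_ediv_cancel'
    obtain ⟨u, hu⟩ := Int.even_mul_succ_self (j-1)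
    exact ⟨u, by linarith⟩
  have h2 : 2 * (j * (j+1) / 2) = j * (j+1) := by
    apply Int.mul_ediv_cancel'
    obtain ⟨v, hv⟩ := Int.even_mul_succ_self j
    exact ⟨v, by linarith⟩
  unfold EE
  constructor <;> intro h
  · linear_combination 2*h - (a:ℤ)*h1 - (b:ℤ)*h2
  · have h5 : 2 * ((a:ℤ) * (j * (j - 1) / 2) + (b:ℤ) * (j * (j + 1) / 2)) = 2 * N := by
      linear_combination h + (a:ℤ)*h1 + (b:ℤ)*h2
    linarith

noncomputable def theta2 (a b σ c d τ : ℕ) : PowerSeries ℤ :=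
  PowerSeries.mk fun N => ∑ y ∈ bx N ×ˢ bx N,
    if EE a b σ y.1 + EE c d τ y.2 = 2*(N:ℤ)
    then (-1:ℤ)^y.1.natAbs * (-1:ℤ)^y.2.natAbs else 0

lemma EE_shift (a b σ : ℕ) (j : ℤ) : EE a b (σ+1) j = EE a b σ j + 2 := by
  unfold EE; push_cast; ring

lemma bx_mono {p N : ℕ} (h : p ≤ N) : bx p ⊆ bx N := by
  unfold bx; apply Finset.Icc_subset_Icc <;> omega

lemma X_mul_theta (a b σ : ℕ) (ha : 1 ≤ a) (hb : 1 ≤ b) :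
    PowerSeries.X * theta a b σ = theta a b (σ+1) := by
  apply PowerSeries.ext; intro N
  cases N with
  | zero =>
    rw [PowerSeries.coeff_zero_X_mul]
    simp only [theta, PowerSeries.coeff_mk]
    symm; apply Finset.sum_eq_zero; intro j _
    rw [if_neg]
    have h1 := EE_nonneg a b σ j
    have h2 := EE_shift a b σ j
    intro hcon; omega
  | succ n =>
    rw [PowerSeries.coeff_succ_X_mul]
    simp only [theta, PowerSeries.coeff_mk]
    rw [Finset.sum_subset (bx_mono (Nat.le_succ n))]
    · apply Finset.sum_congr rfl; intro j _
      have h2 := EE_shift a b σ j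
      apply if_congr _ rfl rfl
      constructor <;> intro h <;> push_cast at * <;> omega
    · intro j _ hj
      rw [if_neg]
      intro hcon
      exact hj (EE_mem a b σ ha hb j n (le_of_eq hcon))

lemma theta_mul (a b σ c d τ : ℕ) (ha : 1 ≤ a) (hb : 1 ≤ b) (hc : 1 ≤ c) (hd : 1 ≤ d) :
    theta a b σ * theta c d τ = theta2 a b σ c d τ := by
  apply PowerSeries.ext; intro N
  rw [PowerSeries.coeff_mul]
  simp only [theta, theta2, PowerSeries.coeff_mk]
  have step1 : ∀ x ∈ Finset.HasAntidiagonal.antidiagonal N,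
      (∑ j ∈ bx x.1, if EE a b σ j = 2*(x.1:ℤ) then (-1:ℤ)^j.natAbs else 0) *
      (∑ k ∈ bx x.2, if EE c d τ k = 2*(x.2:ℤ) then (-1:ℤ)^k.natAbs else 0)
      = ∑ y ∈ bx N ×ˢ bx N, (if EE a b σ y.1 = 2*(x.1:ℤ) then (-1:ℤ)^y.1.natAbs else 0) *
          (if EE c d τ y.2 = 2*(x.2:ℤ) then (-1:ℤ)^y.2.natAbs else 0) := by
    intro x hx
    rw [Finset.HasAntidiagonal.mem_antidiagonal] at hx
    have e1 : (∑ j ∈ bx x.1, if EE a b σ j = 2*(x.1:ℤ) then (-1:ℤ)^j.natAbs else 0)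
        = ∑ j ∈ bx N, if EE a b σ j = 2*(x.1:ℤ) then (-1:ℤ)^j.natAbs else 0 := by
      apply Finset.sum_subset (bx_mono (by omega))
      intro j _ hj
      rw [if_neg]
      intro hcon
      apply hj
      apply EE_mem a b σ ha hb j x.1 (le_of_eq hcon)
    have e2 : (∑ k ∈ bx x.2, if EE c d τ k = 2*(x.2:ℤ) then (-1:ℤ)^k.natAbs else 0)
        = ∑ k ∈ bx N, if EE c d τ k = 2*(x.2:ℤ) then (-1:ℤ)^k.natAbs else 0 := by
      apply Finset.sum_subset (bx_mono (by omega))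
      intro k _ hk
      rw [if_neg]
      intro hcon
      apply hk
      apply EE_mem c d τ hc hd k x.2 (le_of_eq hcon)
    rw [e1, e2, Finset.sum_mul_sum, ← Finset.sum_product']
  rw [Finset.sum_congr rfl step1, Finset.sum_comm]
  apply Finset.sum_congr rfl
  intro y _
  by_cases h : EE a b σ y.1 + EE c d τ y.2 = 2*(N:ℤ)
  · obtain ⟨p, hp⟩ : ∃ p:ℕ, (p:ℤ)*2 = EE a b σ y.1 := by
      obtain ⟨u, hu⟩ := EE_even a b σ y.1
      have := EE_nonneg a b σ y.1
      exact ⟨u.toNat, by omega⟩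
    obtain ⟨q, hq⟩ : ∃ q:ℕ, (q:ℤ)*2 = EE c d τ y.2 := by
      obtain ⟨u, hu⟩ := EE_even c d τ y.2
      have := EE_nonneg c d τ y.2
      exact ⟨u.toNat, by omega⟩
    rw [if_pos h, Finset.sum_eq_single (p, q)]
    · rw [if_pos (by omega), if_pos (by omega)]
    · intro z hz hne
      rw [Finset.HasAntidiagonal.mem_antidiagonal] at hz
      by_cases h1 : EE a b σ y.1 = 2*(z.1:ℤ)
      · by_cases h2 : EE c d τ y.2 = 2*(z.2:ℤ)
        · exfalso; apply hne
          have e1 : z.1 = p := by omega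
          have e2 : z.2 = q := by omega
          exact Prod.ext e1 e2
        · rw [if_neg h2, mul_zero]
      · rw [if_neg h1, zero_mul]
    · intro habs; exfalso; apply habs
      rw [Finset.HasAntidiagonal.mem_antidiagonal]; omega
  · rw [if_neg h]
    apply Finset.sum_eq_zero
    intro z hz
    rw [Finset.HasAntidiagonal.mem_antidiagonal] at hz
    by_cases h1 : EE a b σ y.1 = 2*(z.1:ℤ)
    · by_cases h2 : EE c d τ y.2 = 2*(z.2:ℤ)
      · exfalso; apply h; omega
      · rw [if_neg h2, mul_zero]
    · rw [if_neg h1, zero_mul]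

lemma pair_mem {a b σ c d τ : ℕ} (ha : 1 ≤ a) (hb : 1 ≤ b) (hc : 1 ≤ c) (hd : 1 ≤ d)
    {y : ℤ×ℤ} {N : ℕ} (h : EE a b σ y.1 + EE c d τ y.2 = 2*(N:ℤ)) : y ∈ bx N ×ˢ bx N := by
  rw [Finset.mem_product]
  exact ⟨EE_mem a b σ ha hb y.1 N (by linarith [EE_nonneg c d τ y.2]),
         EE_mem c d τ hc hd y.2 N (by linarith [EE_nonneg a b σ y.1])⟩

lemma classA (N : ℕ) :
    ∑ y ∈ (bx N ×ˢ bx N).filter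
        (fun y => EE 1 2 0 y.1 + EE 1 2 0 y.2 = 2*(N:ℤ) ∧ (y.1 + 2*y.2) % 5 = 0),
      ((-1:ℤ)^y.1.natAbs * (-1:ℤ)^y.2.natAbs)
    = ∑ y ∈ (bx N ×ˢ bx N).filter
        (fun y => EE 6 9 0 y.1 + EE 7 8 0 y.2 = 2*(N:ℤ)),
      ((-1:ℤ)^y.1.natAbs * (-1:ℤ)^y.2.natAbs) := by
  apply Finset.sum_nbij' (i := fun y => ((y.1 + 2*y.2)/5, (2*y.1 - y.2)/5))
    (j := fun y => (y.1 + 2*y.2, 2*y.1 - y.2))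
  · intro y hy
    obtain ⟨m, n⟩ := y
    simp only [Finset.mem_filter] at hy
    obtain ⟨-, hp, hq⟩ := hy
    dsimp only
    obtain ⟨J, hJ⟩ : (5:ℤ) ∣ (m + 2*n) := by omega
    obtain ⟨K, hK⟩ : (5:ℤ) ∣ (2*m - n) := by omega
    have hJd : (m + 2*n)/5 = J := by omega
    have hKd : (2*m - n)/5 = K := by omega
    have hm : m = J + 2*K := by omega
    have hn : n = 2*J - K := by omega
    rw [hm, hn] at hp
    have hC : EE 6 9 0 J + EE 7 8 0 K = 2*(N:ℤ) := by
      unfold EE at hp ⊢; push_cast at hp ⊢; linear_combination hp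
    rw [hJd, hKd, Finset.mem_filter]
    exact ⟨pair_mem (by norm_num) (by norm_num) (by norm_num) (by norm_num) hC, hC⟩
  · intro y hy
    obtain ⟨j, k⟩ := y
    simp only [Finset.mem_filter] at hy
    obtain ⟨-, hc⟩ := hy
    dsimp only
    have hp : EE 1 2 0 (j + 2*k) + EE 1 2 0 (2*j - k) = 2*(N:ℤ) := by
      unfold EE at hc ⊢; push_cast at hc ⊢; linear_combination hc
    rw [Finset.mem_filter]
    refine ⟨pair_mem (by norm_num) (by norm_num) (by norm_num) (by norm_num) hp, hp, ?_⟩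
    show ((j + 2*k) + 2*(2*j - k)) % 5 = 0
    omega
  · intro y hy
    obtain ⟨m, n⟩ := y
    simp only [Finset.mem_filter] at hy
    obtain ⟨-, -, hq⟩ := hy
    dsimp only at hq ⊢
    rw [Prod.mk.injEq]
    constructor <;> omega
  · intro y _
    obtain ⟨j, k⟩ := y
    dsimp only
    rw [Prod.mk.injEq]
    constructor <;> omega
  · intro y hy
    obtain ⟨m, n⟩ := y
    simp only [Finset.mem_filter] at hy
    obtain ⟨-, -, hq⟩ := hy
    dsimp only at hq ⊢
    rw [sg_mul, sg_mul]
    have hpar : (m + n) % 2 = ((m + 2*n)/5 + (2*m - n)/5) % 2 := by omega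
    rw [hpar]

lemma classB (N : ℕ) :
    ∑ y ∈ (bx N ×ˢ bx N).filter
        (fun y => EE 1 2 0 y.1 + EE 1 2 0 y.2 = 2*(N:ℤ) ∧ (y.1 + 2*y.2) % 5 = 4),
      ((-1:ℤ)^y.1.natAbs * (-1:ℤ)^y.2.natAbs)
    = -∑ y ∈ (bx N ×ˢ bx N).filter
        (fun y => EE 6 9 0 y.1 + EE 2 13 1 y.2 = 2*(N:ℤ)),
      ((-1:ℤ)^y.1.natAbs * (-1:ℤ)^y.2.natAbs) := by
  rw [← Finset.sum_neg_distrib]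
  apply Finset.sum_nbij' (i := fun y => ((-(y.1 + 2*y.2) - 1)/5, (-(2*y.1 - y.2) - 2)/5))
    (j := fun y => (-y.1 - 2*y.2 - 1, -2*y.1 + y.2))
  · intro y hy
    obtain ⟨m, n⟩ := y
    simp only [Finset.mem_filter] at hy
    obtain ⟨-, hp, hq⟩ := hy
    dsimp only
    obtain ⟨J, hJ⟩ : (5:ℤ) ∣ (-(m + 2*n) - 1) := by omega
    obtain ⟨K, hK⟩ : (5:ℤ) ∣ (-(2*m - n) - 2) := by omega
    have hJd : (-(m + 2*n) - 1)/5 = J := by omega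
    have hKd : (-(2*m - n) - 2)/5 = K := by omega
    have hm : m = -J - 2*K - 1 := by omega
    have hn : n = -2*J + K := by omega
    rw [hm, hn] at hp
    have hC : EE 6 9 0 J + EE 2 13 1 K = 2*(N:ℤ) := by
      unfold EE at hp ⊢; push_cast at hp ⊢; linear_combination hp
    rw [hJd, hKd, Finset.mem_filter]
    exact ⟨pair_mem (by norm_num) (by norm_num) (by norm_num) (by norm_num) hC, hC⟩
  · intro y hy
    obtain ⟨j, k⟩ := y
    simp only [Finset.mem_filter] at hy
    obtain ⟨-, hc⟩ := hy
    dsimp only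
    have hp : EE 1 2 0 (-j - 2*k - 1) + EE 1 2 0 (-2*j + k) = 2*(N:ℤ) := by
      unfold EE at hc ⊢; push_cast at hc ⊢; linear_combination hc
    rw [Finset.mem_filter]
    refine ⟨pair_mem (by norm_num) (by norm_num) (by norm_num) (by norm_num) hp, hp, ?_⟩
    show ((-j - 2*k - 1) + 2*(-2*j + k)) % 5 = 4
    omega
  · intro y hy
    obtain ⟨m, n⟩ := y
    simp only [Finset.mem_filter] at hy
    obtain ⟨-, -, hq⟩ := hy
    dsimp only at hq ⊢
    rw [Prod.mk.injEq]
    constructor <;> omega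
  · intro y _
    obtain ⟨j, k⟩ := y
    dsimp only
    rw [Prod.mk.injEq]
    constructor <;> omega
  · intro y hy
    obtain ⟨m, n⟩ := y
    simp only [Finset.mem_filter] at hy
    obtain ⟨-, -, hq⟩ := hy
    dsimp only at hq ⊢
    rw [sg_mul, sg_mul]
    split_ifs <;> omega

lemma classC (N : ℕ) :
    ∑ y ∈ (bx N ×ˢ bx N).filter
        (fun y => EE 1 2 0 y.1 + EE 1 2 0 y.2 = 2*(N:ℤ) ∧ (y.1 + 2*y.2) % 5 = 3),
      ((-1:ℤ)^y.1.natAbs * (-1:ℤ)^y.2.natAbs)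
    = -∑ y ∈ (bx N ×ˢ bx N).filter
        (fun y => EE 12 3 1 y.1 + EE 11 4 0 y.2 = 2*(N:ℤ)),
      ((-1:ℤ)^y.1.natAbs * (-1:ℤ)^y.2.natAbs) := by
  rw [← Finset.sum_neg_distrib]
  apply Finset.sum_nbij' (i := fun y => ((y.1 + 2*y.2 + 2)/5, (y.2 - 2*y.1 + 1)/5))
    (j := fun y => (y.1 - 2*y.2, 2*y.1 + y.2 - 1))
  · intro y hy
    obtain ⟨m, n⟩ := y
    simp only [Finset.mem_filter] at hy
    obtain ⟨-, hp, hq⟩ := hy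
    dsimp only
    obtain ⟨J, hJ⟩ : (5:ℤ) ∣ (m + 2*n + 2) := by omega
    obtain ⟨K, hK⟩ : (5:ℤ) ∣ (n - 2*m + 1) := by omega
    have hJd : (m + 2*n + 2)/5 = J := by omega
    have hKd : (n - 2*m + 1)/5 = K := by omega
    have hm : m = J - 2*K := by omega
    have hn : n = 2*J + K - 1 := by omega
    rw [hm, hn] at hp
    have hC : EE 12 3 1 J + EE 11 4 0 K = 2*(N:ℤ) := by
      unfold EE at hp ⊢; push_cast at hp ⊢; linear_combination hp
    rw [hJd, hKd, Finset.mem_filter]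
    exact ⟨pair_mem (by norm_num) (by norm_num) (by norm_num) (by norm_num) hC, hC⟩
  · intro y hy
    obtain ⟨j, k⟩ := y
    simp only [Finset.mem_filter] at hy
    obtain ⟨-, hc⟩ := hy
    dsimp only
    have hp : EE 1 2 0 (j - 2*k) + EE 1 2 0 (2*j + k - 1) = 2*(N:ℤ) := by
      unfold EE at hc ⊢; push_cast at hc ⊢; linear_combination hc
    rw [Finset.mem_filter]
    refine ⟨pair_mem (by norm_num) (by norm_num) (by norm_num) (by norm_num) hp, hp, ?_⟩
    show ((j - 2*k) + 2*(2*j + k - 1)) % 5 = 3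
    omega
  · intro y hy
    obtain ⟨m, n⟩ := y
    simp only [Finset.mem_filter] at hy
    obtain ⟨-, -, hq⟩ := hy
    dsimp only at hq ⊢
    rw [Prod.mk.injEq]
    constructor <;> omega
  · intro y _
    obtain ⟨j, k⟩ := y
    dsimp only
    rw [Prod.mk.injEq]
    constructor <;> omega
  · intro y hy
    obtain ⟨m, n⟩ := y
    simp only [Finset.mem_filter] at hy
    obtain ⟨-, -, hq⟩ := hy
    dsimp only at hq ⊢
    rw [sg_mul, sg_mul]
    split_ifs <;> omega

lemma classD (N : ℕ) :
    ∑ y ∈ (bx N ×ˢ bx N).filter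
        (fun y => EE 1 2 0 y.1 + EE 1 2 0 y.2 = 2*(N:ℤ) ∧ (y.1 + 2*y.2) % 5 = 1),
      ((-1:ℤ)^y.1.natAbs * (-1:ℤ)^y.2.natAbs)
    = -∑ y ∈ (bx N ×ˢ bx N).filter
        (fun y => EE 12 3 1 y.1 + EE 1 14 1 y.2 = 2*(N:ℤ)),
      ((-1:ℤ)^y.1.natAbs * (-1:ℤ)^y.2.natAbs) := by
  rw [← Finset.sum_neg_distrib]
  apply Finset.sum_nbij' (i := fun y => ((1 - (y.1 + 2*y.2))/5, (2*y.1 - y.2 - 2)/5))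
    (j := fun y => (-y.1 + 2*y.2 + 1, -2*y.1 - y.2))
  · intro y hy
    obtain ⟨m, n⟩ := y
    simp only [Finset.mem_filter] at hy
    obtain ⟨-, hp, hq⟩ := hy
    dsimp only
    obtain ⟨J, hJ⟩ : (5:ℤ) ∣ (1 - (m + 2*n)) := by omega
    obtain ⟨K, hK⟩ : (5:ℤ) ∣ (2*m - n - 2) := by omega
    have hJd : (1 - (m + 2*n))/5 = J := by omega
    have hKd : (2*m - n - 2)/5 = K := by omega
    have hm : m = -J + 2*K + 1 := by omega
    have hn : n = -2*J - K := by omega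
    rw [hm, hn] at hp
    have hC : EE 12 3 1 J + EE 1 14 1 K = 2*(N:ℤ) := by
      unfold EE at hp ⊢; push_cast at hp ⊢; linear_combination hp
    rw [hJd, hKd, Finset.mem_filter]
    exact ⟨pair_mem (by norm_num) (by norm_num) (by norm_num) (by norm_num) hC, hC⟩
  · intro y hy
    obtain ⟨j, k⟩ := y
    simp only [Finset.mem_filter] at hy
    obtain ⟨-, hc⟩ := hy
    dsimp only
    have hp : EE 1 2 0 (-j + 2*k + 1) + EE 1 2 0 (-2*j - k) = 2*(N:ℤ) := by
      unfold EE at hc ⊢; push_cast at hc ⊢; linear_combination hc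
    rw [Finset.mem_filter]
    refine ⟨pair_mem (by norm_num) (by norm_num) (by norm_num) (by norm_num) hp, hp, ?_⟩
    show ((-j + 2*k + 1) + 2*(-2*j - k)) % 5 = 1
    omega
  · intro y hy
    obtain ⟨m, n⟩ := y
    simp only [Finset.mem_filter] at hy
    obtain ⟨-, -, hq⟩ := hy
    dsimp only at hq ⊢
    rw [Prod.mk.injEq]
    constructor <;> omega
  · intro y _
    obtain ⟨j, k⟩ := y
    dsimp only
    rw [Prod.mk.injEq]
    constructor <;> omega
  · intro y hy
    obtain ⟨m, n⟩ := y
    simp only [Finset.mem_filter] at hy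
    obtain ⟨-, -, hq⟩ := hy
    dsimp only at hq ⊢
    rw [sg_mul, sg_mul]
    split_ifs <;> omega


lemma class0 (N : ℕ) :
    ∑ y ∈ (bx N ×ˢ bx N).filter
        (fun y => EE 1 2 0 y.1 + EE 1 2 0 y.2 = 2*(N:ℤ) ∧ (y.1 + 2*y.2) % 5 = 2),
      ((-1:ℤ)^y.1.natAbs * (-1:ℤ)^y.2.natAbs) = 0 := by
  apply Finset.sum_involution
    (g := fun y _ => ((3*y.1 - 4*y.2 - 1)/5, (-4*y.1 - 3*y.2 - 2)/5))
  · intro y hy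
    obtain ⟨m, n⟩ := y
    simp only [Finset.mem_filter] at hy
    obtain ⟨-, -, hq⟩ := hy
    dsimp only
    rw [sg_mul, sg_mul]
    split_ifs <;> omega
  · intro y hy hne
    obtain ⟨m, n⟩ := y
    simp only [Finset.mem_filter] at hy
    obtain ⟨-, -, hq⟩ := hy
    dsimp only
    intro heq
    rw [Prod.mk.injEq] at heq
    obtain ⟨e1, e2⟩ := heq
    omega
  · intro y hy
    obtain ⟨m, n⟩ := y
    simp only [Finset.mem_filter] at hy
    obtain ⟨-, -, hq⟩ := hy
    dsimp only
    rw [Prod.mk.injEq]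
    constructor <;> omega
  · intro y hy
    obtain ⟨m, n⟩ := y
    simp only [Finset.mem_filter] at hy
    obtain ⟨-, hp, hq⟩ := hy
    dsimp only
    obtain ⟨P, hP⟩ : (5:ℤ) ∣ (3*m - 4*n - 1) := by omega
    obtain ⟨Q, hQ⟩ : (5:ℤ) ∣ (-4*m - 3*n - 2) := by omega
    have hPd : (3*m - 4*n - 1)/5 = P := by omega
    have hQd : (-4*m - 3*n - 2)/5 = Q := by omega
    have e1 : (3*m - 4*n - 1)*(3*m - 4*n - 1) = 25*(P*P) := by rw [hP]; ring
    have e2 : (-4*m - 3*n - 2)*(-4*m - 3*n - 2) = 25*(Q*Q) := by rw [hQ]; ring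
    have h25 : 25*(EE 1 2 0 P + EE 1 2 0 Q) = 25*(2*(N:ℤ)) := by
      unfold EE at hp ⊢
      push_cast at hp ⊢
      linear_combination 25*hp - 3*e1 - 3*e2 - 5*hP - 5*hQ
    have hC : EE 1 2 0 P + EE 1 2 0 Q = 2*(N:ℤ) := by linarith
    rw [hPd, hQd, Finset.mem_filter]
    refine ⟨pair_mem (by norm_num) (by norm_num) (by norm_num) (by norm_num) hC, hC, by omega⟩

lemma core (N : ℕ) :
    (∑ y ∈ (bx N ×ˢ bx N).filter (fun y => EE 6 9 0 y.1 + EE 7 8 0 y.2 = 2*(N:ℤ)),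
        ((-1:ℤ)^y.1.natAbs * (-1:ℤ)^y.2.natAbs))
    - (∑ y ∈ (bx N ×ˢ bx N).filter (fun y => EE 6 9 0 y.1 + EE 2 13 1 y.2 = 2*(N:ℤ)),
        ((-1:ℤ)^y.1.natAbs * (-1:ℤ)^y.2.natAbs))
    - (∑ y ∈ (bx N ×ˢ bx N).filter (fun y => EE 12 3 1 y.1 + EE 11 4 0 y.2 = 2*(N:ℤ)),
        ((-1:ℤ)^y.1.natAbs * (-1:ℤ)^y.2.natAbs))
    - (∑ y ∈ (bx N ×ˢ bx N).filter (fun y => EE 12 3 1 y.1 + EE 1 14 1 y.2 = 2*(N:ℤ)),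
        ((-1:ℤ)^y.1.natAbs * (-1:ℤ)^y.2.natAbs))
    = ∑ y ∈ (bx N ×ˢ bx N).filter (fun y => EE 1 2 0 y.1 + EE 1 2 0 y.2 = 2*(N:ℤ)),
        ((-1:ℤ)^y.1.natAbs * (-1:ℤ)^y.2.natAbs) := by
  have hmap : ∀ y ∈ (bx N ×ˢ bx N).filter
      (fun y => EE 1 2 0 y.1 + EE 1 2 0 y.2 = 2*(N:ℤ)),
      (y.1 + 2*y.2) % 5 ∈ ({0,1,2,3,4} : Finset ℤ) := by
    intro y _
    simp only [Finset.mem_insert, Finset.mem_singleton]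
    omega
  have hsplit := Finset.sum_fiberwise_of_maps_to hmap
    (fun y => (-1:ℤ)^y.1.natAbs * (-1:ℤ)^y.2.natAbs)
  rw [← hsplit]
  rw [show ({0,1,2,3,4} : Finset ℤ) = insert 0 (insert 1 (insert 2 (insert 3 {4}))) from rfl]
  rw [Finset.sum_insert (by decide), Finset.sum_insert (by decide),
      Finset.sum_insert (by decide), Finset.sum_insert (by decide), Finset.sum_singleton]
  simp only [Finset.filter_filter]
  rw [classA N, classD N, class0 N, classC N, classB N]
  ring

lemma theta_identity :
    theta2 6 9 0 7 8 0 - theta2 6 9 0 2 13 1 - theta2 12 3 1 11 4 0 - theta2 12 3 1 1 14 1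
    = theta2 1 2 0 1 2 0 := by
  apply PowerSeries.ext; intro N
  simp only [map_sub, theta2, PowerSeries.coeff_mk]
  rw [← Finset.sum_filter, ← Finset.sum_filter, ← Finset.sum_filter, ← Finset.sum_filter,
    ← Finset.sum_filter]
  exact core N



def fmin (t : Finset ℕ) : ℕ := t.min.untopD 0
def fmax (t : Finset ℕ) : ℕ := t.max.unbotD 0

open scoped Classical in
noncomputable def runlen (t : Finset ℕ) : ℕ :=
  if h : ∃ i, fmax t - i ∉ t then Nat.find h else 0

lemma fmax_mem {t : Finset ℕ} (h : t.Nonempty) : fmax t ∈ t := by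
  unfold fmax
  rw [← Finset.coe_max' h]
  exact Finset.max'_mem t h

lemma le_fmax {t : Finset ℕ} {x : ℕ} (hx : x ∈ t) : x ≤ fmax t := by
  unfold fmax
  have h : t.Nonempty := ⟨x, hx⟩
  rw [← Finset.coe_max' h]
  exact Finset.le_max' t x hx

lemma fmin_mem {t : Finset ℕ} (h : t.Nonempty) : fmin t ∈ t := by
  unfold fmin
  rw [← Finset.coe_min' h]
  exact Finset.min'_mem t h

lemma fmin_le {t : Finset ℕ} {x : ℕ} (hx : x ∈ t) : fmin t ≤ x := by
  unfold fmin
  have h : t.Nonempty := ⟨x, hx⟩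
  rw [← Finset.coe_min' h]
  exact Finset.min'_le t x hx

lemma fmax_eqI {t : Finset ℕ} {a : ℕ} (ha : a ∈ t) (hb : ∀ x ∈ t, x ≤ a) : fmax t = a :=
  le_antisymm (by
    have h : t.Nonempty := ⟨a, ha⟩
    exact hb _ (fmax_mem h)) (le_fmax ha)

lemma fmin_eqI {t : Finset ℕ} {a : ℕ} (ha : a ∈ t) (hb : ∀ x ∈ t, a ≤ x) : fmin t = a :=
  le_antisymm (fmin_le ha) (by
    have h : t.Nonempty := ⟨a, ha⟩
    exact hb _ (fmin_mem h))

lemma fmin_pos {t : Finset ℕ} (h0 : 0 ∉ t) (hne : t.Nonempty) : 1 ≤ fmin t := by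
  have := fmin_mem hne
  rcases Nat.eq_zero_or_pos (fmin t) with h | h
  · rw [h] at this; exact absurd this h0
  · exact h

lemma runlen_ex {t : Finset ℕ} (h0 : 0 ∉ t) : ∃ i, fmax t - i ∉ t :=
  ⟨fmax t, by simpa using h0⟩

lemma runlen_run {t : Finset ℕ} (h0 : 0 ∉ t) {i : ℕ} (hi : i < runlen t) :
    fmax t - i ∈ t := by
  unfold runlen at hi
  rw [dif_pos (runlen_ex h0)] at hi
  have := Nat.find_min (runlen_ex h0) hi
  simpa using this

lemma runlen_stop {t : Finset ℕ} (h0 : 0 ∉ t) : fmax t - runlen t ∉ t := by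
  unfold runlen
  rw [dif_pos (runlen_ex h0)]
  exact Nat.find_spec (runlen_ex h0)

lemma runlen_eqI {t : Finset ℕ} (h0 : 0 ∉ t) {r : ℕ}
    (h1 : ∀ i < r, fmax t - i ∈ t) (h2 : fmax t - r ∉ t) : runlen t = r := by
  unfold runlen
  rw [dif_pos (runlen_ex h0)]
  rw [Nat.find_eq_iff]
  exact ⟨h2, fun i hi => by simpa using h1 i hi⟩

lemma runlen_geI {t : Finset ℕ} (h0 : 0 ∉ t) {r : ℕ}
    (h1 : ∀ i < r, fmax t - i ∈ t) : r ≤ runlen t := by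
  by_contra hcon
  exact (runlen_stop h0) (h1 _ (by omega))

lemma runlen_pos {t : Finset ℕ} (h0 : 0 ∉ t) (hne : t.Nonempty) : 1 ≤ runlen t :=
  runlen_geI h0 (fun i hi => by
    have : i = 0 := by omega
    subst this; simpa using fmax_mem hne)

lemma runlen_le_fmax {t : Finset ℕ} (h0 : 0 ∉ t) : runlen t ≤ fmax t := by
  by_contra hcon
  have h := runlen_run h0 (i := fmax t) (by omega)
  rw [Nat.sub_self] at h
  exact h0 h

lemma fmax_Icc {a b : ℕ} (h : a ≤ b) : fmax (Finset.Icc a b) = b :=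
  fmax_eqI (Finset.mem_Icc.mpr ⟨h, le_refl b⟩) (fun x hx => (Finset.mem_Icc.mp hx).2)

lemma fmin_Icc {a b : ℕ} (h : a ≤ b) : fmin (Finset.Icc a b) = a :=
  fmin_eqI (Finset.mem_Icc.mpr ⟨le_refl a, h⟩) (fun x hx => (Finset.mem_Icc.mp hx).1)

lemma runlen_Icc {a b : ℕ} (h : a ≤ b) (ha : 1 ≤ a) : runlen (Finset.Icc a b) = b + 1 - a := by
  have h0 : 0 ∉ Finset.Icc a b := by rw [Finset.mem_Icc]; omega
  apply runlen_eqI h0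
  · intro i hi
    rw [fmax_Icc h, Finset.mem_Icc]
    omega
  · rw [fmax_Icc h, Finset.mem_Icc]
    omega

def IsExc (t : Finset ℕ) : Prop :=
  ∃ m : ℕ, 1 ≤ m ∧ (t = Finset.Icc m (2*m - 1) ∨ t = Finset.Icc (m+1) (2*m))

noncomputable def franklinMap (t : Finset ℕ) : Finset ℕ :=
  if fmin t ≤ runlen t then
    insert (fmax t + 1) ((t.erase (fmin t)).erase (fmax t + 1 - fmin t))
  else
    insert (runlen t) (insert (fmax t - runlen t) (t.erase (fmax t)))

lemma down_2s {t : Finset ℕ} (h0 : 0 ∉ t) (hne : t.Nonempty) (hnexc : ¬ IsExc t)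
    (hle : fmin t ≤ runlen t) : 2 * fmin t ≤ fmax t := by
  by_contra hcon
  push_neg at hcon
  have hs1 : 1 ≤ fmin t := fmin_pos h0 hne
  have hblock : ∀ x, fmax t + 1 - fmin t ≤ x → x ≤ fmax t → x ∈ t := by
    intro x h1 h2
    have : x = fmax t - (fmax t - x) := by omega
    rw [this]
    apply runlen_run h0
    omega
  have hsub : t ⊆ Finset.Icc (fmin t) (fmax t) :=
    fun x hx => Finset.mem_Icc.mpr ⟨fmin_le hx, le_fmax hx⟩
  have hMs : fmin t ≤ fmax t := le_fmax (fmin_mem hne)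
  have h1 : fmax t + 1 - fmin t ∈ t := hblock _ (le_refl _) (by omega)
  have h2 : fmin t ≤ fmax t + 1 - fmin t := (Finset.mem_Icc.mp (hsub h1)).1
  apply hnexc
  refine ⟨fmin t, hs1, Or.inl ?_⟩
  apply Finset.Subset.antisymm
  · intro x hx
    have := hsub hx
    rw [Finset.mem_Icc] at *
    omega
  · intro x hx
    rw [Finset.mem_Icc] at hx
    exact hblock x (by omega) (by omega)

lemma up_2l {t : Finset ℕ} (h0 : 0 ∉ t) (hne : t.Nonempty) (hnexc : ¬ IsExc t)
    (hgt : runlen t < fmin t) : 2 * runlen t + 1 ≤ fmax t := by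
  by_contra hcon
  push_neg at hcon
  have hl1 : 1 ≤ runlen t := runlen_pos h0 hne
  have hlM : runlen t ≤ fmax t := runlen_le_fmax h0
  have hblock : ∀ x, fmax t + 1 - runlen t ≤ x → x ≤ fmax t → x ∈ t := by
    intro x h1 h2
    have : x = fmax t - (fmax t - x) := by omega
    rw [this]
    apply runlen_run h0
    omega
  have hstop : fmax t - runlen t ∉ t := runlen_stop h0
  have heq : t = Finset.Icc (fmax t + 1 - runlen t) (fmax t) := by
    apply Finset.Subset.antisymm
    · intro x hx
      rw [Finset.mem_Icc]
      refine ⟨?_, le_fmax hx⟩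
      by_contra hxc
      push_neg at hxc
      have hx1 : x ≠ fmax t - runlen t := fun h => hstop (h ▸ hx)
      have hxs : fmin t ≤ x := fmin_le hx
      omega
    · intro x hx
      rw [Finset.mem_Icc] at hx
      exact hblock x hx.1 hx.2
  have hs : fmin t = fmax t + 1 - runlen t := by
    conv_lhs => rw [heq]
    exact fmin_Icc (by omega)
  apply hnexc
  have h1 : fmax t + 1 - runlen t = runlen t + 1 := by omega
  have h2 : fmax t = 2 * runlen t := by omega
  have hgoal : t = Finset.Icc (runlen t + 1) (2 * runlen t) := by
    conv_lhs => rw [heq]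
    rw [h1, h2]
  exact ⟨runlen t, hl1, Or.inr hgoal⟩

lemma down_main {t : Finset ℕ} (h0 : 0 ∉ t) (hne : t.Nonempty) (hnexc : ¬ IsExc t)
    (hle : fmin t ≤ runlen t) :
    (∑ x ∈ franklinMap t, x) = (∑ x ∈ t, x) ∧ (franklinMap t).card + 1 = t.card ∧
    0 ∉ franklinMap t ∧ (franklinMap t).Nonempty ∧ ¬ IsExc (franklinMap t) ∧
    franklinMap (franklinMap t) = t := by
  have hs1 : 1 ≤ fmin t := fmin_pos h0 hne
  have hlM : runlen t ≤ fmax t := runlen_le_fmax h0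
  have h2s : 2 * fmin t ≤ fmax t := down_2s h0 hne hnexc hle
  set s := fmin t with hsdef
  set M := fmax t with hMdef
  set l := runlen t with hldef
  have hsmem : s ∈ t := fmin_mem hne
  have hbmem : M + 1 - s ∈ t := by
    have h : M + 1 - s = M - (s - 1) := by omega
    rw [h]
    exact runlen_run h0 (by omega)
  have hMt : M + 1 ∉ t := fun h => by have := le_fmax h; omega
  have htp : franklinMap t = insert (M+1) ((t.erase s).erase (M+1-s)) := by
    unfold franklinMap
    rw [if_pos hle]
  set t' := insert (M+1) ((t.erase s).erase (M+1-s)) with ht'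
  rw [htp]
  have hb_in_erase : M + 1 - s ∈ t.erase s := Finset.mem_erase.mpr ⟨by omega, hbmem⟩
  have hM1_notin : M + 1 ∉ (t.erase s).erase (M+1-s) := fun h =>
    hMt (Finset.mem_of_mem_erase (Finset.mem_of_mem_erase h))
  have hmem' : ∀ x, x ∈ t' ↔ (x = M+1 ∨ (x ∈ t ∧ x ≠ s ∧ x ≠ M+1-s)) := by
    intro x
    rw [ht', Finset.mem_insert, Finset.mem_erase, Finset.mem_erase]
    tauto
  -- sum
  have e3 : (∑ x ∈ t', x) = (M+1) + ∑ x ∈ (t.erase s).erase (M+1-s), x := by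
    rw [ht']
    exact Finset.sum_insert hM1_notin
  have e2 : (∑ x ∈ (t.erase s).erase (M+1-s), x) + (M+1-s) = ∑ x ∈ t.erase s, x :=
    Finset.sum_erase_add _ _ hb_in_erase
  have e1 : (∑ x ∈ t.erase s, x) + s = ∑ x ∈ t, x :=
    Finset.sum_erase_add _ _ hsmem
  have hsum : (∑ x ∈ t', x) = ∑ x ∈ t, x := by omega
  -- card
  have c3 : t'.card = ((t.erase s).erase (M+1-s)).card + 1 := by
    rw [ht']
    exact Finset.card_insert_of_notMem hM1_notin
  have c2 : ((t.erase s).erase (M+1-s)).card = (t.erase s).card - 1 :=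
    Finset.card_erase_of_mem hb_in_erase
  have c1 : (t.erase s).card = t.card - 1 := Finset.card_erase_of_mem hsmem
  have hcard2 : 2 ≤ t.card := by
    have hsub2 : ({s, M+1-s} : Finset ℕ) ⊆ t := by
      intro x hx
      rw [Finset.mem_insert, Finset.mem_singleton] at hx
      rcases hx with h | h <;> subst h
      · exact hsmem
      · exact hbmem
    have hc2 : ({s, M+1-s} : Finset ℕ).card = 2 := by
      rw [Finset.card_insert_of_notMem (by rw [Finset.mem_singleton]; omega),
        Finset.card_singleton]
    have := Finset.card_le_card hsub2
    omega
  have hce : 1 ≤ (t.erase s).card := by omega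
  have hcard : t'.card + 1 = t.card := by omega
  -- 0 ∉ t', nonempty
  have h0' : 0 ∉ t' := by
    rw [hmem' 0]
    rintro (h | ⟨h, -, -⟩)
    · omega
    · exact h0 h
  have hne' : t'.Nonempty := ⟨M+1, by rw [hmem']; exact Or.inl rfl⟩
  -- parameters of t'
  have hmax' : fmax t' = M + 1 := by
    apply fmax_eqI
    · rw [hmem']; exact Or.inl rfl
    · intro x hx
      rw [hmem'] at hx
      rcases hx with h | ⟨h, -, -⟩
      · omega
      · have := le_fmax h; omega
  have hmin' : s + 1 ≤ fmin t' := by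
    have hm := fmin_mem hne'
    rw [hmem'] at hm
    rcases hm with h | ⟨h, hne2, -⟩
    · omega
    · have := fmin_le h
      omega
  have hrun' : runlen t' = s := by
    apply runlen_eqI h0'
    · intro i hi
      rw [hmax', hmem']
      rcases Nat.eq_zero_or_pos i with h | h
      · left; omega
      · right
        have h1 : M + 1 - i = M - (i-1) := by omega
        refine ⟨by rw [h1]; exact runlen_run h0 (by omega), by omega, by omega⟩
    · rw [hmax', hmem']
      rintro (h | ⟨-, -, h⟩)
      · omega
      · exact h (by omega)
  -- involution
  have hff : franklinMap t' = t := by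
    unfold franklinMap
    rw [if_neg (by rw [hrun']; omega), hrun', hmax']
    have he : t'.erase (M+1) = (t.erase s).erase (M+1-s) := by
      rw [ht']
      exact Finset.erase_insert hM1_notin
    rw [he, Finset.insert_erase hb_in_erase, Finset.insert_erase hsmem]
  -- non exceptional
  have hnexc' : ¬ IsExc t' := by
    rintro ⟨m, hm1, hcase | hcase⟩
    · have f2 : runlen t' = m := by
        rw [hcase, runlen_Icc (by omega) hm1]
        omega
      have f1 : fmin t' = m := by
        rw [hcase]
        exact fmin_Icc (by omega)
      omega
    · have f1 : fmax t' = 2*m := by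
        rw [hcase]
        exact fmax_Icc (by omega)
      have f2 : runlen t' = m := by
        rw [hcase, runlen_Icc (by omega) (by omega)]
        omega
      omega
  exact ⟨hsum, hcard, h0', hne', hnexc', hff⟩

lemma up_main {t : Finset ℕ} (h0 : 0 ∉ t) (hne : t.Nonempty) (hnexc : ¬ IsExc t)
    (hgt : runlen t < fmin t) :
    (∑ x ∈ franklinMap t, x) = (∑ x ∈ t, x) ∧ (franklinMap t).card = t.card + 1 ∧
    0 ∉ franklinMap t ∧ (franklinMap t).Nonempty ∧ ¬ IsExc (franklinMap t) ∧
    franklinMap (franklinMap t) = t := by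
  have hs1 : 1 ≤ fmin t := fmin_pos h0 hne
  have hl1 : 1 ≤ runlen t := runlen_pos h0 hne
  have hlM : runlen t ≤ fmax t := runlen_le_fmax h0
  have h2l : 2 * runlen t + 1 ≤ fmax t := up_2l h0 hne hnexc hgt
  set s := fmin t with hsdef
  set M := fmax t with hMdef
  set l := runlen t with hldef
  have hMmem : M ∈ t := fmax_mem hne
  have hstop : M - l ∉ t := runlen_stop h0
  have hlnotin : l ∉ t := fun h => by have := fmin_le h; omega
  have htp : franklinMap t = insert l (insert (M-l) (t.erase M)) := by
    unfold franklinMap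
    rw [if_neg (by omega)]
  set t' := insert l (insert (M-l) (t.erase M)) with ht'
  rw [htp]
  have hml_ne : M - l ∉ t.erase M := fun h => hstop (Finset.mem_of_mem_erase h)
  have hl_ne : l ∉ insert (M-l) (t.erase M) := by
    rw [Finset.mem_insert]
    rintro (h | h)
    · omega
    · exact hlnotin (Finset.mem_of_mem_erase h)
  have hmem' : ∀ x, x ∈ t' ↔ (x = l ∨ x = M - l ∨ (x ∈ t ∧ x ≠ M)) := by
    intro x
    rw [ht', Finset.mem_insert, Finset.mem_insert, Finset.mem_erase]
    tauto
  -- sum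
  have e1 : (∑ x ∈ t.erase M, x) + M = ∑ x ∈ t, x := Finset.sum_erase_add _ _ hMmem
  have e2 : (∑ x ∈ insert (M-l) (t.erase M), x) = (M-l) + ∑ x ∈ t.erase M, x :=
    Finset.sum_insert hml_ne
  have e3 : (∑ x ∈ t', x) = l + ∑ x ∈ insert (M-l) (t.erase M), x := by
    rw [ht']
    exact Finset.sum_insert hl_ne
  have hsum : (∑ x ∈ t', x) = ∑ x ∈ t, x := by omega
  -- card
  have c1 : (t.erase M).card = t.card - 1 := Finset.card_erase_of_mem hMmem
  have c2 : (insert (M-l) (t.erase M)).card = (t.erase M).card + 1 :=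
    Finset.card_insert_of_notMem hml_ne
  have c3 : t'.card = (insert (M-l) (t.erase M)).card + 1 := by
    rw [ht']
    exact Finset.card_insert_of_notMem hl_ne
  have hc1 : 1 ≤ t.card := Finset.card_pos.mpr hne
  have hcard : t'.card = t.card + 1 := by omega
  -- 0 ∉, nonempty
  have h0' : 0 ∉ t' := by
    rw [hmem' 0]
    rintro (h | h | ⟨h, -⟩)
    · omega
    · omega
    · exact h0 h
  have hne' : t'.Nonempty := ⟨l, by rw [hmem']; exact Or.inl rfl⟩
  -- parameters
  have hmax' : fmax t' = M - 1 := by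
    apply fmax_eqI
    · rw [hmem']
      rcases Nat.lt_or_ge 1 l with h | h
      · right; right
        refine ⟨?_, by omega⟩
        have h1 : M - 1 = M - 1 := rfl
        exact runlen_run h0 (by omega)
      · right; left; omega
    · intro x hx
      rw [hmem'] at hx
      rcases hx with h | h | ⟨h, hne2⟩
      · omega
      · omega
      · have := le_fmax h; omega
  have hmin' : fmin t' = l := by
    apply fmin_eqI
    · rw [hmem']; exact Or.inl rfl
    · intro x hx
      rw [hmem'] at hx
      rcases hx with h | h | ⟨h, -⟩
      · omega
      · omega
      · have := fmin_le h; omega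
  have hrunge : l ≤ runlen t' := by
    apply runlen_geI h0'
    intro i hi
    rw [hmax', hmem']
    rcases Nat.lt_or_ge i (l-1) with h | h
    · right; right
      have h1 : M - 1 - i = M - (i+1) := by omega
      refine ⟨by rw [h1]; exact runlen_run h0 (by omega), by omega⟩
    · right; left; omega
  -- involution
  have hff : franklinMap t' = t := by
    unfold franklinMap
    rw [if_pos (by rw [hmin']; exact hrunge), hmax', hmin']
    rw [show M - 1 + 1 = M from by omega]
    have he1 : t'.erase l = insert (M-l) (t.erase M) := by
      rw [ht']
      exact Finset.erase_insert hl_ne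
    rw [he1, Finset.erase_insert hml_ne, Finset.insert_erase hMmem]
  -- non exceptional
  have hnexc' : ¬ IsExc t' := by
    rintro ⟨m, hm1, hcase | hcase⟩
    · have f1 : fmin t' = m := by
        rw [hcase]
        exact fmin_Icc (by omega)
      have f2 : fmax t' = 2*m - 1 := by
        rw [hcase]
        exact fmax_Icc (by omega)
      omega
    · have f1 : fmin t' = m + 1 := by
        rw [hcase]
        exact fmin_Icc (by omega)
      have f2 : fmax t' = 2*m := by
        rw [hcase]
        exact fmax_Icc (by omega)
      omega
  exact ⟨hsum, hcard, h0', hne', hnexc', hff⟩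

lemma sum_Icc_two (a b : ℕ) (h : a ≤ b) :
    (∑ x ∈ Finset.Icc a b, x) * 2 = (a + b) * (b + 1 - a) := by
  induction b with
  | zero =>
    have ha : a = 0 := by omega
    subst ha
    simp
  | succ n ih =>
    rcases Nat.lt_or_ge a (n+1) with h2 | h2
    · have ih2 := ih (by omega)
      rw [Finset.sum_Icc_succ_top (by omega)]
      zify [show a ≤ n + 1 from by omega, show a ≤ n + 1 + 1 from by omega] at ih2 ⊢
      linear_combination ih2
    · have ha : a = n + 1 := by omega
      subst ha
      rw [Finset.Icc_self, Finset.sum_singleton]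
      have : n + 1 + 1 - (n+1) = 1 := by omega
      rw [this]
      ring

lemma franklin_facts {t : Finset ℕ} (h0 : 0 ∉ t) (hne : t.Nonempty) (hnexc : ¬ IsExc t) :
    (∑ x ∈ franklinMap t, x) = (∑ x ∈ t, x) ∧
    ((franklinMap t).card + 1 = t.card ∨ (franklinMap t).card = t.card + 1) ∧
    0 ∉ franklinMap t ∧ (franklinMap t).Nonempty ∧ ¬ IsExc (franklinMap t) ∧
    franklinMap (franklinMap t) = t := by
  rcases le_or_gt (fmin t) (runlen t) with h | h
  · obtain ⟨a, b, c, d, e, f⟩ := down_main h0 hne hnexc h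
    exact ⟨a, Or.inl b, c, d, e, f⟩
  · obtain ⟨a, b, c, d, e, f⟩ := up_main h0 hne hnexc h
    exact ⟨a, Or.inr b, c, d, e, f⟩

open scoped Classical in
lemma franklin_sum_zero (N : ℕ) (hN : 1 ≤ N) :
    ∑ t ∈ ((Finset.range (N+2)).powerset.filter
      (fun t => (∑ x ∈ t, x) = N ∧ 0 ∉ t)).filter (fun t => ¬ IsExc t),
      (-1:ℤ)^t.card = 0 := by
  have ext : ∀ t, t ∈ ((Finset.range (N+2)).powerset.filter
      (fun t => (∑ x ∈ t, x) = N ∧ 0 ∉ t)).filter (fun t => ¬ IsExc t) →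
      (t ⊆ Finset.range (N+2)) ∧ (∑ x ∈ t, x) = N ∧ 0 ∉ t ∧ ¬ IsExc t ∧ t.Nonempty := by
    intro t ht
    simp only [Finset.mem_filter, Finset.mem_powerset] at ht
    obtain ⟨⟨hsub, hsumN, h0⟩, hnexc⟩ := ht
    refine ⟨hsub, hsumN, h0, hnexc, ?_⟩
    rcases Finset.eq_empty_or_nonempty t with h | h
    · subst h; simp at hsumN; omega
    · exact h
  apply Finset.sum_involution (g := fun t _ => franklinMap t)
  · intro t ht
    obtain ⟨hsub, hsumN, h0, hnexc, hne⟩ := ext t ht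
    obtain ⟨f1, f2, f3, f4, f5, f6⟩ := franklin_facts h0 hne hnexc
    rcases f2 with h | h
    · rw [show t.card = (franklinMap t).card + 1 from by omega, pow_succ]
      ring
    · rw [h, pow_succ]
      ring
  · intro t ht _
    obtain ⟨hsub, hsumN, h0, hnexc, hne⟩ := ext t ht
    obtain ⟨f1, f2, f3, f4, f5, f6⟩ := franklin_facts h0 hne hnexc
    intro heq
    have := congrArg Finset.card heq
    omega
  · intro t ht
    obtain ⟨hsub, hsumN, h0, hnexc, hne⟩ := ext t ht
    obtain ⟨f1, f2, f3, f4, f5, f6⟩ := franklin_facts h0 hne hnexc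
    simp only [Finset.mem_filter, Finset.mem_powerset]
    refine ⟨⟨?_, by rw [f1]; exact hsumN, f3⟩, f5⟩
    intro x hx
    rw [Finset.mem_range]
    have hxs : x ≤ ∑ y ∈ franklinMap t, y :=
      Finset.single_le_sum (fun i _ => Nat.zero_le i) hx
    omega
  · intro t ht
    obtain ⟨hsub, hsumN, h0, hnexc, hne⟩ := ext t ht
    exact (franklin_facts h0 hne hnexc).2.2.2.2.2

open scoped Classical in
lemma exc_sum (N : ℕ) (hN : 1 ≤ N) :
    (∑ j ∈ (bx N).filter (fun j => EE 1 2 0 j = 2*(N:ℤ)), (-1:ℤ)^j.natAbs)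
    = ∑ t ∈ ((Finset.range (N+2)).powerset.filter
        (fun t => (∑ x ∈ t, x) = N ∧ 0 ∉ t)).filter (fun t => IsExc t),
      (-1:ℤ)^t.card := by
  have hEE : ∀ j : ℤ, EE 1 2 0 j = 2*(N:ℤ) → 3*j^2 + j = 2*(N:ℤ) := by
    intro j h
    unfold EE at h
    push_cast at h
    linear_combination h
  have hEE' : ∀ j : ℤ, 3*j^2 + j = 2*(N:ℤ) → EE 1 2 0 j = 2*(N:ℤ) := by
    intro j h
    unfold EE
    push_cast
    linear_combination h
  apply Finset.sum_nbij'
    (i := fun j => if 0 ≤ j then Finset.Icc (j.toNat + 1) (2*j.toNat)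
      else Finset.Icc ((-j).toNat) (2*(-j).toNat - 1))
    (j := fun u => if fmax u = 2 * fmin u - 1 then -(fmin u : ℤ) else ((fmin u : ℤ) - 1))
  · intro j hj
    rw [Finset.mem_filter] at hj
    have hc := hEE j hj.2
    have hj0 : j ≠ 0 := by
      intro h
      rw [h] at hc
      simp at hc
      omega
    by_cases hpos : 0 ≤ j
    · rw [if_pos hpos]
      set m := j.toNat with hmdef
      have hm : (m:ℤ) = j := Int.toNat_of_nonneg hpos
      have hm1 : 1 ≤ m := by omega
      have hNm : 3*(m*m) + m = 2*N := by
        zify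
        rw [hm]
        linear_combination hc
      have hmm : m ≤ m*m := Nat.le_mul_of_pos_left m (by omega)
      have hle : 2*m ≤ N := by omega
      have hgauss := sum_Icc_two (m+1) (2*m) (by omega)
      rw [show 2*m+1-(m+1) = m from by omega] at hgauss
      have hexp : (m+1+2*m)*m = 3*(m*m)+m := by ring
      have hsum : (∑ x ∈ Finset.Icc (m+1) (2*m), x) = N := by omega
      simp only [Finset.mem_filter, Finset.mem_powerset]
      refine ⟨⟨?_, hsum, by rw [Finset.mem_Icc]; omega⟩, ⟨m, hm1, Or.inr rfl⟩⟩
      intro x hx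
      rw [Finset.mem_Icc] at hx
      rw [Finset.mem_range]
      omega
    · rw [if_neg hpos]
      set m := (-j).toNat with hmdef
      have hm : (m:ℤ) = -j := Int.toNat_of_nonneg (by omega)
      have hm1 : 1 ≤ m := by omega
      have hNm : 3*(m*m) = 2*N + m := by
        zify
        rw [hm]
        linear_combination hc
      have hmm : m ≤ m*m := Nat.le_mul_of_pos_left m (by omega)
      have h2m : 2 ≤ m → 2*m ≤ m*m := fun h => Nat.mul_le_mul_right m h
      have hle : 2*m ≤ N + 2 := by
        rcases Nat.lt_or_ge m 2 with h | h
        · omega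
        · have := h2m h
          omega
      have hgauss := sum_Icc_two m (2*m-1) (by omega)
      rw [show 2*m-1+1-m = m from by omega] at hgauss
      have hexp : (m + (2*m-1))*m + m = 3*(m*m) := by
        zify [show (1:ℕ) ≤ 2*m from by omega]
        ring
      have hsum : (∑ x ∈ Finset.Icc m (2*m-1), x) = N := by omega
      simp only [Finset.mem_filter, Finset.mem_powerset]
      refine ⟨⟨?_, hsum, by rw [Finset.mem_Icc]; omega⟩, ⟨m, hm1, Or.inl rfl⟩⟩
      intro x hx
      rw [Finset.mem_Icc] at hx
      rw [Finset.mem_range]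
      omega
  · intro u hu
    simp only [Finset.mem_filter, Finset.mem_powerset] at hu
    obtain ⟨⟨hsub, hsumN, h0u⟩, m, hm1, hcase | hcase⟩ := hu
    · have hf1 : fmin u = m := by rw [hcase]; exact fmin_Icc (by omega)
      have hf2 : fmax u = 2*m - 1 := by rw [hcase]; exact fmax_Icc (by omega)
      rw [hf1, hf2, if_pos rfl]
      have hgauss := sum_Icc_two m (2*m-1) (by omega)
      rw [show 2*m-1+1-m = m from by omega] at hgauss
      have hexp : (m + (2*m-1))*m + m = 3*(m*m) := by
        zify [show (1:ℕ) ≤ 2*m from by omega]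
        ring
      rw [hcase] at hsumN
      have hNm : 3*(m*m) = 2*N + m := by omega
      have hcond : EE 1 2 0 (-(m:ℤ)) = 2*(N:ℤ) := by
        apply hEE'
        have : ((3*(m*m) : ℕ) : ℤ) = ((2*N + m : ℕ) : ℤ) := by exact_mod_cast hNm
        push_cast at this
        linear_combination this
      rw [Finset.mem_filter]
      exact ⟨EE_mem 1 2 0 (by norm_num) (by norm_num) _ N (le_of_eq hcond), hcond⟩
    · have hf1 : fmin u = m + 1 := by rw [hcase]; exact fmin_Icc (by omega)
      have hf2 : fmax u = 2*m := by rw [hcase]; exact fmax_Icc (by omega)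
      rw [hf1, hf2, if_neg (by omega)]
      have hgauss := sum_Icc_two (m+1) (2*m) (by omega)
      rw [show 2*m+1-(m+1) = m from by omega] at hgauss
      have hexp : (m+1+2*m)*m = 3*(m*m)+m := by ring
      rw [hcase] at hsumN
      have hNm : 3*(m*m) + m = 2*N := by omega
      have hval : ((m+1:ℕ):ℤ) - 1 = (m:ℤ) := by push_cast; ring
      rw [hval]
      have hcond : EE 1 2 0 ((m:ℤ)) = 2*(N:ℤ) := by
        apply hEE'
        have : ((3*(m*m) + m : ℕ) : ℤ) = ((2*N : ℕ) : ℤ) := by exact_mod_cast hNm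
        push_cast at this
        linear_combination this
      rw [Finset.mem_filter]
      exact ⟨EE_mem 1 2 0 (by norm_num) (by norm_num) _ N (le_of_eq hcond), hcond⟩
  · intro j hj
    rw [Finset.mem_filter] at hj
    have hc := hEE j hj.2
    have hj0 : j ≠ 0 := by
      intro h
      rw [h] at hc
      simp at hc
      omega
    by_cases hpos : 0 ≤ j
    · rw [if_pos hpos]
      have hm1 : 1 ≤ j.toNat := by omega
      have hf1 : fmin (Finset.Icc (j.toNat+1) (2*j.toNat)) = j.toNat + 1 :=
        fmin_Icc (by omega)
      have hf2 : fmax (Finset.Icc (j.toNat+1) (2*j.toNat)) = 2*j.toNat :=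
        fmax_Icc (by omega)
      rw [hf1, hf2, if_neg (by omega)]
      omega
    · rw [if_neg hpos]
      have hm1 : 1 ≤ (-j).toNat := by omega
      have hf1 : fmin (Finset.Icc ((-j).toNat) (2*(-j).toNat - 1)) = (-j).toNat :=
        fmin_Icc (by omega)
      have hf2 : fmax (Finset.Icc ((-j).toNat) (2*(-j).toNat - 1)) = 2*(-j).toNat - 1 :=
        fmax_Icc (by omega)
      rw [hf1, hf2, if_pos (by omega)]
      omega
  · intro u hu
    simp only [Finset.mem_filter, Finset.mem_powerset] at hu
    obtain ⟨⟨hsub, hsumN, h0u⟩, m, hm1, hcase | hcase⟩ := hu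
    · have hf1 : fmin u = m := by rw [hcase]; exact fmin_Icc (by omega)
      have hf2 : fmax u = 2*m - 1 := by rw [hcase]; exact fmax_Icc (by omega)
      rw [hf1, hf2, if_pos rfl, if_neg (show ¬((0:ℤ) ≤ -(m:ℤ)) from by omega), hcase]
      congr 1 <;> omega
    · have hf1 : fmin u = m + 1 := by rw [hcase]; exact fmin_Icc (by omega)
      have hf2 : fmax u = 2*m := by rw [hcase]; exact fmax_Icc (by omega)
      rw [hf1, hf2, if_neg (show ¬(2*m = 2*(m+1) - 1) from by omega),
        if_pos (show (0:ℤ) ≤ ((m+1:ℕ):ℤ) - 1 from by push_cast; omega), hcase]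
      congr 1 <;> omega
  · intro j hj
    rw [Finset.mem_filter] at hj
    have hc := hEE j hj.2
    have hj0 : j ≠ 0 := by
      intro h
      rw [h] at hc
      simp at hc
      omega
    by_cases hpos : 0 ≤ j
    · rw [if_pos hpos, Nat.card_Icc]
      congr 1
      omega
    · rw [if_neg hpos, Nat.card_Icc]
      congr 1
      omega

lemma expand_prod (N : ℕ) :
    (PowerSeries.coeff N) (∏ i ∈ Finset.range (N+1),
      (1 - (PowerSeries.X : PowerSeries ℤ)^(i+1)))
    = ∑ t ∈ (Finset.range (N+1)).powerset,
        (if (∑ i ∈ t, (i+1)) = N then (-1:ℤ)^t.card else 0) := by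
  have h1 : ∏ i ∈ Finset.range (N+1), (1 - (PowerSeries.X : PowerSeries ℤ)^(i+1))
      = ∑ t ∈ (Finset.range (N+1)).powerset,
          (PowerSeries.C ((-1:ℤ)^t.card)) * PowerSeries.X^(∑ i ∈ t, (i+1)) := by
    rw [show (∏ i ∈ Finset.range (N+1), (1 - (PowerSeries.X : PowerSeries ℤ)^(i+1)))
        = ∏ i ∈ Finset.range (N+1),
          ((fun i => -(PowerSeries.X : PowerSeries ℤ)^(i+1)) i
            + (fun _ => (1 : PowerSeries ℤ)) i) from
      Finset.prod_congr rfl (fun i _ => by ring)]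
    rw [Finset.prod_add]
    apply Finset.sum_congr rfl
    intro t _
    rw [Finset.prod_const_one, mul_one]
    calc ∏ i ∈ t, -(PowerSeries.X : PowerSeries ℤ)^(i+1)
        = ∏ i ∈ t, (PowerSeries.C (-1:ℤ) * (PowerSeries.X : PowerSeries ℤ)^(i+1)) :=
          Finset.prod_congr rfl (fun i _ => by rw [map_neg, map_one]; ring)
      _ = (∏ _i ∈ t, PowerSeries.C (-1:ℤ)) * ∏ i ∈ t, (PowerSeries.X : PowerSeries ℤ)^(i+1) :=
          Finset.prod_mul_distrib
      _ = PowerSeries.C ((-1:ℤ)^t.card) * PowerSeries.X^(∑ i ∈ t, (i+1)) := by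
          rw [Finset.prod_const, ← map_pow, Finset.prod_pow_eq_pow_sum]
  rw [h1, map_sum]
  apply Finset.sum_congr rfl
  intro t _
  rw [PowerSeries.coeff_C_mul, PowerSeries.coeff_X_pow]
  by_cases h : (∑ i ∈ t, (i+1)) = N
  · rw [if_pos h, if_pos h.symm, mul_one]
  · rw [if_neg h, if_neg (fun hh => h hh.symm), mul_zero]

lemma reindex (N : ℕ) :
    (∑ t ∈ (Finset.range (N+1)).powerset,
      (if (∑ i ∈ t, (i+1)) = N then (-1:ℤ)^t.card else 0))
    = ∑ u ∈ (Finset.range (N+2)).powerset.filter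
        (fun u => (∑ x ∈ u, x) = N ∧ 0 ∉ u), (-1:ℤ)^u.card := by
  rw [← Finset.sum_filter]
  apply Finset.sum_nbij' (i := fun t => t.image Nat.succ) (j := fun u => u.image (fun x => x - 1))
  · intro t ht
    simp only [Finset.mem_filter, Finset.mem_powerset] at ht ⊢
    obtain ⟨hsub, hsum⟩ := ht
    have hinj : ∀ x ∈ t, ∀ y ∈ t, Nat.succ x = Nat.succ y → x = y := by
      intro x _ y _ h; omega
    refine ⟨?_, ?_, ?_⟩
    · intro x hx
      rw [Finset.mem_image] at hx
      obtain ⟨a, ha, rfl⟩ := hx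
      have := hsub ha
      rw [Finset.mem_range] at *
      omega
    · rw [Finset.sum_image hinj]
      simpa using hsum
    · rw [Finset.mem_image]
      rintro ⟨a, -, h⟩
      exact Nat.succ_ne_zero a h
  · intro u hu
    simp only [Finset.mem_filter, Finset.mem_powerset] at hu ⊢
    obtain ⟨hsub, hsum, h0u⟩ := hu
    have hinj : ∀ x ∈ u, ∀ y ∈ u, x - 1 = y - 1 → x = y := by
      intro x hx y hy h
      have hx0 : x ≠ 0 := fun h => h0u (h ▸ hx)
      have hy0 : y ≠ 0 := fun h => h0u (h ▸ hy)
      omega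
    refine ⟨?_, ?_⟩
    · intro x hx
      rw [Finset.mem_image] at hx
      obtain ⟨a, ha, rfl⟩ := hx
      have := hsub ha
      rw [Finset.mem_range] at *
      omega
    · rw [Finset.sum_image hinj]
      rw [← hsum]
      apply Finset.sum_congr rfl
      intro x hx
      have hx0 : x ≠ 0 := fun h => h0u (h ▸ hx)
      omega
  · intro t _
    rw [Finset.image_image]
    have : ((fun x => x - 1) ∘ Nat.succ) = id := funext fun x => rfl
    rw [this, Finset.image_id]
  · intro u hu
    simp only [Finset.mem_filter, Finset.mem_powerset] at hu
    obtain ⟨hsub, hsum, h0u⟩ := hu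
    rw [Finset.image_image]
    rw [Finset.image_congr (g := id) (fun x hx => by
      have hx0 : x ≠ 0 := fun h => h0u (h ▸ hx)
      simp only [Function.comp_apply, id_eq]
      omega)]
    rw [Finset.image_id]
  · intro t _
    rw [Finset.card_image_of_injective t Nat.succ_injective]

open scoped Classical in
lemma pnt : eulerPhi = theta 1 2 0 := by
  apply PowerSeries.ext
  intro N
  rw [eulerPhi, theta, PowerSeries.coeff_mk, PowerSeries.coeff_mk, expand_prod, reindex]
  rcases Nat.eq_zero_or_pos N with h0 | h1
  · subst h0
    decide
  · rw [← Finset.sum_filter_add_sum_filter_not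
      ((Finset.range (N+2)).powerset.filter (fun u => (∑ x ∈ u, x) = N ∧ 0 ∉ u))
      (fun t => IsExc t) (fun t => (-1:ℤ)^t.card)]
    rw [franklin_sum_zero N h1, add_zero, ← exc_sum N h1, Finset.sum_filter]


/-- `g(q⁶,q⁹)·(g(q⁷,q⁸) − q·g(q²,q¹³)) − q·g(q¹²,q³)·(g(q¹¹,q⁴) + q·g(q,q¹⁴)) = φ(q)²`. -/
theorem stmt5 :
    gJacobi 6 9 * (gJacobi 7 8 - (PowerSeries.X : PowerSeries ℤ) * gJacobi 2 13) -
        (PowerSeries.X : PowerSeries ℤ) * gJacobi 12 3 *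
          (gJacobi 11 4 + (PowerSeries.X : PowerSeries ℤ) * gJacobi 1 14) =
      eulerPhi ^ 2 := by
  rw [gJacobi_eq 6 9, gJacobi_eq 7 8, gJacobi_eq 2 13, gJacobi_eq 12 3, gJacobi_eq 11 4,
    gJacobi_eq 1 14, pnt]
  rw [X_mul_theta 2 13 0 (by norm_num) (by norm_num),
    X_mul_theta 12 3 0 (by norm_num) (by norm_num),
    X_mul_theta 1 14 0 (by norm_num) (by norm_num)]
  rw [mul_sub, mul_add, sq]
  rw [theta_mul 6 9 0 7 8 0 (by norm_num) (by norm_num) (by norm_num) (by norm_num),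
    theta_mul 6 9 0 2 13 1 (by norm_num) (by norm_num) (by norm_num) (by norm_num),
    theta_mul 12 3 1 11 4 0 (by norm_num) (by norm_num) (by norm_num) (by norm_num),
    theta_mul 12 3 1 1 14 1 (by norm_num) (by norm_num) (by norm_num) (by norm_num),
    theta_mul 1 2 0 1 2 0 (by norm_num) (by norm_num) (by norm_num) (by norm_num)]
  linear_combination theta_identity
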